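/- Let p,q ≥ 0, n = p+q ≥ 1, and let γ be a (p,q)-clan. A complete flag F in ℂⁿ satisfies dim(F_i ∩ E_p) = γ(i;+) and dim(F_i ∩ Ẽ_q) = γ(i;−) for all 1 ≤ i ≤ n if and only if there exists a (p,q)-clan λ with FS(λ) = FS(γ) such that F ∈ Q_λ. In other words, the set Y₀ = { F : dim(F_i ∩ E_p) = γ(i;+) and dim(F_i ∩ Ẽ_q) = γ(i;−) for all i } is precisely the union of the sets Q_λ over all clans λ having the same FS-pattern as γ. -/

import Mathlib

open Finset Module

noncomputable section

/-- Symbols of an FS-pattern: `+`, `-`, `F` (first occurrence / opener),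
`S` (second occurrence / closer). -/
inductive FSSymbol : Type
  | plus : FSSymbol
  | minus : FSSymbol
  | fst : FSSymbol
  | snd : FSSymbol
  deriving DecidableEq

/-- A `(p,q)`-clan on `{1,…,p+q}` (positions are `Fin (p+q)`, `0`-based).
`symbol i = Sum.inl j` means positions `i` and `j` carry the same natural
number (they form an arc), and `symbol i = Sum.inr true` (resp. `false`)
means position `i` carries a `+` (resp. a `-`).  The number of `+`'s minus
the number of `-`'s equals `p - q`. -/
structure Clan (p q : ℕ) where
  symbol : Fin (p + q) → (Fin (p + q)) ⊕ Bool
  mate_ne : ∀ i j, symbol i = Sum.inl j → j ≠ i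
  mate_invol : ∀ i j, symbol i = Sum.inl j → symbol j = Sum.inl i
  balance : (univ.filter fun i => symbol i = Sum.inr true).card + q
      = (univ.filter fun i => symbol i = Sum.inr false).card + p

namespace Clan

variable {p q : ℕ}

/-- `γ(i;+)`: the number of `+` signs and of arcs `(s,t)` with `t ≤ i`
among the first `i` positions (`i` is `1`-based). -/
def cplus (γ : Clan p q) (i : ℕ) : ℕ :=
  (univ.filter fun k : Fin (p + q) =>
    k.val < i ∧ (γ.symbol k = Sum.inr true ∨ ∃ j, γ.symbol k = Sum.inl j ∧ j < k)).card

/-- `γ(i;-)`: the number of `-` signs and of arcs `(s,t)` with `t ≤ i`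
among the first `i` positions (`i` is `1`-based). -/
def cminus (γ : Clan p q) (i : ℕ) : ℕ :=
  (univ.filter fun k : Fin (p + q) =>
    k.val < i ∧ (γ.symbol k = Sum.inr false ∨ ∃ j, γ.symbol k = Sum.inl j ∧ j < k)).card

/-- `γ(i;j)`: the number of arcs `(s,t)` with `s ≤ i < j < t`
(`i`, `j` are `1`-based). -/
def cpair (γ : Clan p q) (i j : ℕ) : ℕ :=
  (univ.filter fun s : Fin (p + q) =>
    s.val < i ∧ ∃ t, γ.symbol s = Sum.inl t ∧ s < t ∧ j ≤ t.val).card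

/-- The FS-pattern of a clan: signs stay, openers become `F`, closers `S`. -/
def FS (γ : Clan p q) (i : Fin (p + q)) : FSSymbol :=
  match γ.symbol i with
  | Sum.inr true => FSSymbol.plus
  | Sum.inr false => FSSymbol.minus
  | Sum.inl j => if j < i then FSSymbol.snd else FSSymbol.fst

/-- A clan avoids the pattern `(1,2,1,2)` iff no two of its arcs cross. -/
def Avoids1212 (γ : Clan p q) : Prop :=
  ¬ ∃ i1 i2 i3 i4 : Fin (p + q), i1 < i2 ∧ i2 < i3 ∧ i3 < i4 ∧
      γ.symbol i1 = Sum.inl i3 ∧ γ.symbol i2 = Sum.inl i4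

/-- `γ₊`: positions carrying a `+` or the second occurrence of a number. -/
def plusSet (γ : Clan p q) : Finset (Fin (p + q)) :=
  univ.filter fun i => γ.symbol i = Sum.inr true ∨ ∃ j, γ.symbol i = Sum.inl j ∧ j < i

/-- `γ̃₊`: positions carrying a `+` or the first occurrence of a number. -/
def tplusSet (γ : Clan p q) : Finset (Fin (p + q)) :=
  univ.filter fun i => γ.symbol i = Sum.inr true ∨ ∃ j, γ.symbol i = Sum.inl j ∧ i < j

end Clan

/-- The rank matrix `r_w(i,j) = #{k ≤ i : w(k) ≤ j}` (`i`, `j` are `1`-based). -/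
def rankMatrix {n : ℕ} (w : Equiv.Perm (Fin n)) (i j : ℕ) : ℕ :=
  (univ.filter fun k : Fin n => k.val < i ∧ (w k).val < j).card

/-- `u` is the permutation `u(γ)`: it assigns the values `p, p-1, …, 1` to the
positions of `γ₊` taken in increasing order, and `n, n-1, …, p+1` to the
positions of `γ₋` taken in increasing order (values are `0`-based, so the
`1`-based value of `u` at `i` is `(u i).val + 1`). -/
def IsUPerm {p q : ℕ} (γ : Clan p q) (u : Equiv.Perm (Fin (p + q))) : Prop :=
  ∀ i : Fin (p + q),
    (i ∈ γ.plusSet → (u i).val + 1 + (γ.plusSet.filter fun j => j < i).card = p) ∧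
    (i ∉ γ.plusSet →
      (u i).val + 1 + (univ.filter fun j => j ∉ γ.plusSet ∧ j < i).card = p + q)

/-- `v` is the permutation `v(γ)`: it assigns the values `1, …, p` to the
positions of `γ̃₊` taken in increasing order, and `p+1, …, n` to the
positions of `γ̃₋` taken in increasing order (values are `0`-based). -/
def IsVPerm {p q : ℕ} (γ : Clan p q) (v : Equiv.Perm (Fin (p + q))) : Prop :=
  ∀ i : Fin (p + q),
    (i ∈ γ.tplusSet → (v i).val = (γ.tplusSet.filter fun j => j < i).card) ∧
    (i ∉ γ.tplusSet →
      (v i).val = p + (univ.filter fun j => j ∉ γ.tplusSet ∧ j < i).card)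

/-- `E_j ⊆ ℂⁿ`: the span of the first `j` standard basis vectors, realized as
the subspace of vectors vanishing in coordinates `≥ j`. -/
def Efirst (n j : ℕ) : Submodule ℂ (Fin n → ℂ) :=
  ⨅ k ∈ {k : Fin n | j ≤ k.val}, LinearMap.ker (LinearMap.proj k : (Fin n → ℂ) →ₗ[ℂ] ℂ)

/-- `Ẽ_j ⊆ ℂⁿ`: the span of the last `j` standard basis vectors, realized as
the subspace of vectors vanishing in coordinates `< n - j`. -/
def Elast (n j : ℕ) : Submodule ℂ (Fin n → ℂ) :=
  ⨅ k ∈ {k : Fin n | k.val < n - j}, LinearMap.ker (LinearMap.proj k : (Fin n → ℂ) →ₗ[ℂ] ℂ)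

/-- The projection `π : ℂⁿ → E_p` with kernel `Ẽ_q` (for `n = p + q`). -/
def projE (n p : ℕ) : (Fin n → ℂ) →ₗ[ℂ] (Fin n → ℂ) where
  toFun v := fun k => if k.val < p then v k else 0
  map_add' u v := by funext k; by_cases h : k.val < p <;> simp [h]
  map_smul' c v := by funext k; by_cases h : k.val < p <;> simp [h]

/-- A complete flag `F_0 ⊂ F_1 ⊂ ⋯ ⊂ F_n` in `ℂⁿ`, `dim F_i = i`. -/
structure CompleteFlag (n : ℕ) where
  F : Fin (n + 1) → Submodule ℂ (Fin n → ℂ)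
  mono : Monotone F
  finrank_eq : ∀ i, finrank ℂ ↥(F i) = i.val

/-- Membership of a complete flag in the set `Q_γ`: the three linear-algebraic
conditions of Theorem `orbit_description`. -/
def MemQ {p q : ℕ} (γ : Clan p q) (Fl : CompleteFlag (p + q)) : Prop :=
  (∀ i : ℕ, 1 ≤ i → ∀ hi : i ≤ p + q,
      finrank ℂ ↥(Fl.F ⟨i, by omega⟩ ⊓ Efirst (p + q) p) = γ.cplus i ∧
      finrank ℂ ↥(Fl.F ⟨i, by omega⟩ ⊓ Elast (p + q) q) = γ.cminus i) ∧
  (∀ i j : ℕ, 1 ≤ i → ∀ hij : i < j, ∀ hj : j ≤ p + q,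
      finrank ℂ ↥((Fl.F ⟨i, by omega⟩).map (projE (p + q) p) ⊔ Fl.F ⟨j, by omega⟩)
        = j + γ.cpair i j)

/-- Membership in `K = GL(p,ℂ) × GL(q,ℂ)`, the block-diagonal subgroup of
`GL(p+q, ℂ)`: all entries mixing the first `p` and last `q` coordinates
vanish. -/
def InK (p q : ℕ) (g : (Matrix (Fin (p + q)) (Fin (p + q)) ℂ)ˣ) : Prop :=
  ∀ i j : Fin (p + q), ¬(i.val < p ↔ j.val < p) →
    (g : Matrix (Fin (p + q)) (Fin (p + q)) ℂ) i j = 0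

/-- `Fl' = g · Fl`: the flag `Fl'` is obtained by applying the invertible
matrix `g` to each subspace of the flag `Fl`. -/
def FlagMapsTo {n : ℕ} (g : (Matrix (Fin n) (Fin n) ℂ)ˣ) (Fl Fl' : CompleteFlag n) : Prop :=
  ∀ i, Fl'.F i = (Fl.F i).map (Matrix.mulVecLin (g : Matrix (Fin n) (Fin n) ℂ))

/-- A partial matching of `{1,…,n}`, given by its set of arcs `(s,t)`, `s < t`;
distinct arcs are disjoint. -/
def IsPartialMatching {n : ℕ} (M : Finset (Fin n × Fin n)) : Prop :=
  (∀ a ∈ M, a.1 < a.2) ∧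
  ∀ a ∈ M, ∀ b ∈ M, a ≠ b → a.1 ≠ b.1 ∧ a.1 ≠ b.2 ∧ a.2 ≠ b.1 ∧ a.2 ≠ b.2

/-- The number of crossing pairs of arcs of `M` (each crossing pair counted
once, ordered by its smaller opener). -/
def crossNum {n : ℕ} (M : Finset (Fin n × Fin n)) : ℕ :=
  ((M ×ˢ M).filter fun ab =>
    ab.1.1 < ab.2.1 ∧ ab.2.1 < ab.1.2 ∧ ab.1.2 < ab.2.2).card

/-- `M` is a noncrossing partial matching whose openers are exactly the
`F`-positions of the pattern `d` and whose closers are exactly the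
`S`-positions of `d`. -/
def MatchesPattern {n : ℕ} (d : Fin n → FSSymbol) (M : Finset (Fin n × Fin n)) : Prop :=
  IsPartialMatching M ∧
  (∀ i : Fin n, (∃ t, (i, t) ∈ M) ↔ d i = FSSymbol.fst) ∧
  (∀ i : Fin n, (∃ s, (s, i) ∈ M) ↔ d i = FSSymbol.snd) ∧
  ¬ ∃ a ∈ M, ∃ b ∈ M, a.1 < b.1 ∧ b.1 < a.2 ∧ a.2 < b.2

/-- The values `{w(1),…,w(i)}` arranged in increasing order. -/
def sortedPrefix {n : ℕ} (w : Equiv.Perm (Fin n)) (i : ℕ) : List (Fin n) :=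
  Finset.sort ((univ.filter fun k : Fin n => k.val < i).image w) (· ≤ ·)


/-! ### Auxiliary lemmas -/

namespace Clan

variable {p q : ℕ} (γ : Clan p q)

lemma FS_eq_plus_iff (i : Fin (p + q)) :
    γ.FS i = FSSymbol.plus ↔ γ.symbol i = Sum.inr true := by
  rcases h : γ.symbol i with j | b
  · simp only [FS, h]; split <;> simp
  · cases b <;> simp [FS, h]

lemma FS_eq_minus_iff (i : Fin (p + q)) :
    γ.FS i = FSSymbol.minus ↔ γ.symbol i = Sum.inr false := by
  rcases h : γ.symbol i with j | b
  · simp only [FS, h]; split <;> simp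
  · cases b <;> simp [FS, h]

lemma FS_eq_snd_iff (i : Fin (p + q)) :
    γ.FS i = FSSymbol.snd ↔ ∃ j, γ.symbol i = Sum.inl j ∧ j < i := by
  rcases h : γ.symbol i with j | b
  · simp only [FS, h]
    constructor
    · intro hs
      by_cases hj : j < i
      · exact ⟨j, rfl, hj⟩
      · simp [hj] at hs
    · rintro ⟨j', hj', hlt⟩
      obtain rfl : j' = j := by simpa using hj'.symm
      simp [hlt]
  · cases b <;> simp [FS, h]

lemma FS_eq_fst_iff (i : Fin (p + q)) :
    γ.FS i = FSSymbol.fst ↔ ∃ j, γ.symbol i = Sum.inl j ∧ i < j := by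
  rcases h : γ.symbol i with j | b
  · have hne : j ≠ i := γ.mate_ne i j h
    simp only [FS, h]
    constructor
    · intro hs
      by_cases hj : j < i
      · simp [hj] at hs
      · exact ⟨j, rfl, lt_of_le_of_ne (not_lt.mp hj) (Ne.symm hne)⟩
    · rintro ⟨j', hj', hlt⟩
      obtain rfl : j' = j := by simpa using hj'.symm
      simp [not_lt.mpr hlt.le]
  · cases b <;> simp [FS, h]

lemma cplus_eq_FS (i : ℕ) :
    γ.cplus i = (univ.filter fun k : Fin (p + q) =>
      k.val < i ∧ (γ.FS k = FSSymbol.plus ∨ γ.FS k = FSSymbol.snd)).card := by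
  unfold cplus
  congr 1
  apply filter_congr
  intro k _
  simp only [FS_eq_plus_iff, FS_eq_snd_iff]

lemma cminus_eq_FS (i : ℕ) :
    γ.cminus i = (univ.filter fun k : Fin (p + q) =>
      k.val < i ∧ (γ.FS k = FSSymbol.minus ∨ γ.FS k = FSSymbol.snd)).card := by
  unfold cminus
  congr 1
  apply filter_congr
  intro k _
  simp only [FS_eq_minus_iff, FS_eq_snd_iff]

lemma cplus_congr {lam : Clan p q} (h : lam.FS = γ.FS) (i : ℕ) :
    lam.cplus i = γ.cplus i := by
  rw [cplus_eq_FS, cplus_eq_FS, h]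

lemma cminus_congr {lam : Clan p q} (h : lam.FS = γ.FS) (i : ℕ) :
    lam.cminus i = γ.cminus i := by
  rw [cminus_eq_FS, cminus_eq_FS, h]

lemma cplus_zero : γ.cplus 0 = 0 := by
  simp [cplus]

lemma cminus_zero : γ.cminus 0 = 0 := by
  simp [cminus]

lemma cplus_succ (k : ℕ) (hk : k < p + q) :
    γ.cplus (k + 1) = γ.cplus k +
      (if γ.FS ⟨k, hk⟩ = FSSymbol.plus ∨ γ.FS ⟨k, hk⟩ = FSSymbol.snd then 1 else 0) := by
  rw [cplus_eq_FS, cplus_eq_FS]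
  by_cases hC : γ.FS ⟨k, hk⟩ = FSSymbol.plus ∨ γ.FS ⟨k, hk⟩ = FSSymbol.snd
  · rw [if_pos hC]
    have : (univ.filter fun x : Fin (p + q) =>
        x.val < k + 1 ∧ (γ.FS x = FSSymbol.plus ∨ γ.FS x = FSSymbol.snd))
        = insert ⟨k, hk⟩ (univ.filter fun x : Fin (p + q) =>
          x.val < k ∧ (γ.FS x = FSSymbol.plus ∨ γ.FS x = FSSymbol.snd)) := by
      ext x
      simp only [mem_filter, mem_univ, true_and, mem_insert]
      constructor
      · rintro ⟨hx, hFS⟩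
        rcases Nat.lt_succ_iff_lt_or_eq.mp hx with h | h
        · exact Or.inr ⟨h, hFS⟩
        · exact Or.inl (Fin.ext h)
      · rintro (rfl | ⟨hx, hFS⟩)
        · exact ⟨Nat.lt_succ_self _, hC⟩
        · exact ⟨Nat.lt_succ_of_lt hx, hFS⟩
    rw [this, card_insert_of_notMem (by simp)]
  · rw [if_neg hC, add_zero]
    congr 1
    ext x
    simp only [mem_filter, mem_univ, true_and, and_congr_left_iff]
    intro hFS
    constructor
    · intro hx
      rcases Nat.lt_succ_iff_lt_or_eq.mp hx with h | h
      · exact h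
      · exact absurd hFS (by rw [show x = ⟨k, hk⟩ from Fin.ext h]; exact hC)
    · exact Nat.lt_succ_of_lt

lemma cminus_succ (k : ℕ) (hk : k < p + q) :
    γ.cminus (k + 1) = γ.cminus k +
      (if γ.FS ⟨k, hk⟩ = FSSymbol.minus ∨ γ.FS ⟨k, hk⟩ = FSSymbol.snd then 1 else 0) := by
  rw [cminus_eq_FS, cminus_eq_FS]
  by_cases hC : γ.FS ⟨k, hk⟩ = FSSymbol.minus ∨ γ.FS ⟨k, hk⟩ = FSSymbol.snd
  · rw [if_pos hC]
    have : (univ.filter fun x : Fin (p + q) =>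
        x.val < k + 1 ∧ (γ.FS x = FSSymbol.minus ∨ γ.FS x = FSSymbol.snd))
        = insert ⟨k, hk⟩ (univ.filter fun x : Fin (p + q) =>
          x.val < k ∧ (γ.FS x = FSSymbol.minus ∨ γ.FS x = FSSymbol.snd)) := by
      ext x
      simp only [mem_filter, mem_univ, true_and, mem_insert]
      constructor
      · rintro ⟨hx, hFS⟩
        rcases Nat.lt_succ_iff_lt_or_eq.mp hx with h | h
        · exact Or.inr ⟨h, hFS⟩
        · exact Or.inl (Fin.ext h)
      · rintro (rfl | ⟨hx, hFS⟩)
        · exact ⟨Nat.lt_succ_self _, hC⟩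
        · exact ⟨Nat.lt_succ_of_lt hx, hFS⟩
    rw [this, card_insert_of_notMem (by simp)]
  · rw [if_neg hC, add_zero]
    congr 1
    ext x
    simp only [mem_filter, mem_univ, true_and, and_congr_left_iff]
    intro hFS
    constructor
    · intro hx
      rcases Nat.lt_succ_iff_lt_or_eq.mp hx with h | h
      · exact h
      · exact absurd hFS (by rw [show x = ⟨k, hk⟩ from Fin.ext h]; exact hC)
    · exact Nat.lt_succ_of_lt

end Clan

/-! ### Linear algebra helpers -/

section LinHelp

set_option linter.unusedSectionVars false

variable {V : Type*} [AddCommGroup V] [Module ℂ V] [FiniteDimensional ℂ V]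

lemma sup_span_of_mem (A : Submodule ℂ V) {x : V} (hx : x ∈ A) : A ⊔ (ℂ ∙ x) = A :=
  sup_eq_left.2 ((Submodule.span_singleton_le_iff_mem x A).2 hx)

lemma finrank_sup_span_of_not_mem (A : Submodule ℂ V) {x : V} (hx : x ∉ A) :
    finrank ℂ ↥(A ⊔ (ℂ ∙ x)) = finrank ℂ A + 1 := by
  have hxne : x ≠ 0 := fun h => hx (h ▸ A.zero_mem)
  have hle : finrank ℂ ↥(A ⊔ (ℂ ∙ x)) ≤ finrank ℂ A + 1 := by
    have := Submodule.finrank_sup_add_finrank_inf_eq A (ℂ ∙ x)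
    have h1 : finrank ℂ ↥(ℂ ∙ x) = 1 := finrank_span_singleton hxne
    omega
  have hlt : finrank ℂ A < finrank ℂ ↥(A ⊔ (ℂ ∙ x)) := by
    apply Submodule.finrank_lt_finrank_of_lt
    refine lt_of_le_of_ne le_sup_left (fun h => hx ?_)
    have : x ∈ A ⊔ (ℂ ∙ x) := (le_sup_right : (ℂ ∙ x) ≤ A ⊔ (ℂ ∙ x)) (Submodule.mem_span_singleton_self x)
    rwa [← h] at this
  omega

lemma finrank_sup_span_le (A : Submodule ℂ V) (x : V) :
    finrank ℂ ↥(A ⊔ (ℂ ∙ x)) ≤ finrank ℂ A + 1 := by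
  by_cases hx : x ∈ A
  · rw [sup_span_of_mem A hx]; omega
  · rw [finrank_sup_span_of_not_mem A hx]

lemma mem_of_finrank_sup_span_eq (A : Submodule ℂ V) (x : V)
    (h : finrank ℂ ↥(A ⊔ (ℂ ∙ x)) = finrank ℂ A) : x ∈ A := by
  by_contra hx
  rw [finrank_sup_span_of_not_mem A hx] at h
  omega

lemma finrank_map_add_finrank_inf_ker (f : V →ₗ[ℂ] V) (G : Submodule ℂ V) :
    finrank ℂ ↥(G.map f) + finrank ℂ ↥(G ⊓ LinearMap.ker f) = finrank ℂ G := by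
  have h := LinearMap.finrank_range_add_finrank_ker (f.domRestrict G)
  rw [LinearMap.range_domRestrict, LinearMap.ker_domRestrict] at h
  have e1 : (LinearMap.ker f).comap G.subtype = (LinearMap.ker f ⊓ G).comap G.subtype := by
    ext x; simp [x.2]
  have e2 : finrank ℂ ↥((LinearMap.ker f ⊓ G).comap G.subtype)
      = finrank ℂ ↥(LinearMap.ker f ⊓ G) :=
    (Submodule.comapSubtypeEquivOfLe inf_le_right).finrank_eq
  rw [e1, e2, inf_comm] at h
  exact h

end LinHelp

/-! ### Flag helpers -/

/-- The `i`-th member of a complete flag, with the natural-number index clamped to `[0,n]`. -/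
def FF {n : ℕ} (Fl : CompleteFlag n) (i : ℕ) : Submodule ℂ (Fin n → ℂ) :=
  Fl.F ⟨min i n, by omega⟩

lemma FF_eq {n : ℕ} (Fl : CompleteFlag n) {i : ℕ} (h : i ≤ n) :
    FF Fl i = Fl.F ⟨i, by omega⟩ := by
  unfold FF
  congr 1
  exact Fin.ext (min_eq_left h)

lemma FF_mono {n : ℕ} (Fl : CompleteFlag n) {i j : ℕ} (h : i ≤ j) : FF Fl i ≤ FF Fl j :=
  Fl.mono (by simp [Fin.le_def]; omega)

lemma finrank_FF {n : ℕ} (Fl : CompleteFlag n) {i : ℕ} (h : i ≤ n) :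
    finrank ℂ ↥(FF Fl i) = i := by
  unfold FF
  rw [Fl.finrank_eq]
  exact min_eq_left h

lemma FF_zero {n : ℕ} (Fl : CompleteFlag n) : FF Fl 0 = ⊥ := by
  have h : finrank ℂ ↥(FF Fl 0) = 0 := finrank_FF Fl (Nat.zero_le n)
  exact Submodule.finrank_eq_zero.mp h

lemma FF_last {n : ℕ} (Fl : CompleteFlag n) : FF Fl n = ⊤ := by
  apply Submodule.eq_top_of_finrank_eq
  rw [finrank_FF Fl le_rfl]
  simp [Module.finrank_pi]

lemma exists_step {n : ℕ} (Fl : CompleteFlag n) {i : ℕ} (hi : i < n) :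
    ∃ v, v ∉ FF Fl i ∧ FF Fl (i + 1) = FF Fl i ⊔ (ℂ ∙ v) := by
  have hle : FF Fl i ≤ FF Fl (i + 1) := FF_mono Fl (Nat.le_succ i)
  have hlt : FF Fl i < FF Fl (i + 1) := by
    refine lt_of_le_of_ne hle (fun h => ?_)
    have h1 := finrank_FF Fl hi.le
    have h2 := finrank_FF Fl (show i + 1 ≤ n by omega)
    rw [h] at h1; omega
  obtain ⟨v, hv1, hv2⟩ := SetLike.exists_of_lt hlt
  refine ⟨v, hv2, ?_⟩
  have hsub : FF Fl i ⊔ (ℂ ∙ v) ≤ FF Fl (i + 1) :=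
    sup_le hle ((Submodule.span_singleton_le_iff_mem v _).2 hv1)
  refine (Submodule.eq_of_le_of_finrank_le hsub ?_).symm
  rw [finrank_sup_span_of_not_mem _ hv2, finrank_FF Fl hi.le, finrank_FF Fl (Nat.succ_le_of_lt hi)]

/-! ### projE / Efirst / Elast facts -/

section Proj

variable {p q : ℕ}

lemma mem_Efirst {n j : ℕ} (x : Fin n → ℂ) :
    x ∈ Efirst n j ↔ ∀ k : Fin n, j ≤ k.val → x k = 0 := by
  simp [Efirst, Submodule.mem_iInf]

lemma mem_Elast {n j : ℕ} (x : Fin n → ℂ) :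
    x ∈ Elast n j ↔ ∀ k : Fin n, k.val < n - j → x k = 0 := by
  simp [Elast, Submodule.mem_iInf]

lemma projE_apply (n p : ℕ) (x : Fin n → ℂ) (k : Fin n) :
    projE n p x k = if k.val < p then x k else 0 := rfl

/-- `ρ = id - π`, the projection onto `Ẽ_q` along `E_p`. -/
def rhoE (n p : ℕ) : (Fin n → ℂ) →ₗ[ℂ] (Fin n → ℂ) := LinearMap.id - projE n p

lemma rhoE_apply (n p : ℕ) (x : Fin n → ℂ) (k : Fin n) :
    rhoE n p x k = if k.val < p then 0 else x k := by
  simp only [rhoE, LinearMap.sub_apply, LinearMap.id_apply, Pi.sub_apply, projE_apply]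
  split <;> simp

lemma projE_add_rhoE (n p : ℕ) (x : Fin n → ℂ) : projE n p x + rhoE n p x = x := by
  funext k
  simp only [Pi.add_apply, projE_apply, rhoE_apply]
  split <;> simp

lemma projE_mem_Efirst (n p : ℕ) (x : Fin n → ℂ) : projE n p x ∈ Efirst n p := by
  rw [mem_Efirst]
  intro k hk
  simp [projE_apply, Nat.not_lt.mpr hk]

lemma rhoE_mem_Elast (x : Fin (p + q) → ℂ) : rhoE (p + q) p x ∈ Elast (p + q) q := by
  rw [mem_Elast]
  intro k hk
  have : k.val < p := by omega
  simp [rhoE_apply, this]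

lemma rhoE_eq_self_of_mem_Elast {x : Fin (p + q) → ℂ} (hx : x ∈ Elast (p + q) q) :
    rhoE (p + q) p x = x := by
  rw [mem_Elast] at hx
  funext k
  rw [rhoE_apply]
  split_ifs with h
  · exact (hx k (by omega)).symm
  · rfl

lemma ker_rhoE : LinearMap.ker (rhoE (p + q) p) = Efirst (p + q) p := by
  ext x
  rw [LinearMap.mem_ker, mem_Efirst]
  constructor
  · intro h k hk
    have := congrFun h k
    rw [rhoE_apply] at this
    simpa [Nat.not_lt.mpr hk] using this
  · intro h
    funext k
    rw [show (0 : Fin (p+q) → ℂ) k = 0 from rfl, rhoE_apply]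
    split_ifs with hkp
    · rfl
    · exact h k (by omega)

end Proj

/-! ### The rank function `R(i,j) = dim (π(F_i) + F_j)` -/

/-- `R(i,j) = dim (π(F_i) + F_j)` (indices clamped to `[0, p+q]`). -/
def Rk (p q : ℕ) (Fl : CompleteFlag (p + q)) (i j : ℕ) : ℕ :=
  finrank ℂ ↥((FF Fl i).map (projE (p + q) p) ⊔ FF Fl j)

section RkFacts

variable {p q : ℕ} (Fl : CompleteFlag (p + q))

lemma map_sup_span (f : (Fin (p + q) → ℂ) →ₗ[ℂ] (Fin (p + q) → ℂ))
    (A : Submodule ℂ (Fin (p + q) → ℂ)) (v : Fin (p + q) → ℂ) :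
    (A ⊔ (ℂ ∙ v)).map f = A.map f ⊔ (ℂ ∙ (f v)) := by
  rw [Submodule.map_sup, Submodule.map_span, Set.image_singleton]

lemma Rk_zero_left {j : ℕ} (hj : j ≤ p + q) : Rk p q Fl 0 j = j := by
  unfold Rk
  rw [FF_zero, Submodule.map_bot, bot_sup_eq, finrank_FF Fl hj]

lemma Rk_right_top (i : ℕ) : Rk p q Fl i (p + q) = p + q := by
  unfold Rk
  rw [FF_last, sup_top_eq, finrank_top]
  simp [Module.finrank_pi]

lemma Rk_mono_left {i : ℕ} (j : ℕ) (hi : i < p + q) :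
    Rk p q Fl i j ≤ Rk p q Fl (i + 1) j ∧ Rk p q Fl (i + 1) j ≤ Rk p q Fl i j + 1 := by
  obtain ⟨v, -, hstep⟩ := exists_step Fl hi
  unfold Rk
  rw [hstep, map_sup_span, sup_right_comm]
  constructor
  · exact Submodule.finrank_mono le_sup_left
  · exact finrank_sup_span_le _ _

lemma Rk_mono_right (i : ℕ) {j : ℕ} (hj : j < p + q) :
    Rk p q Fl i j ≤ Rk p q Fl i (j + 1) ∧ Rk p q Fl i (j + 1) ≤ Rk p q Fl i j + 1 := by
  obtain ⟨v, -, hstep⟩ := exists_step Fl hj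
  unfold Rk
  rw [hstep, ← sup_assoc]
  constructor
  · exact Submodule.finrank_mono le_sup_left
  · exact finrank_sup_span_le _ _

/-- Submodularity: if adding the new line to the `π`-part increases the rank at a
larger `j'`, it increases it at any smaller `j` as well. -/
lemma Rk_submodular {i j j' : ℕ} (hi : i < p + q) (hjj : j ≤ j')
    (h : Rk p q Fl i j' < Rk p q Fl (i + 1) j') :
    Rk p q Fl (i + 1) j = Rk p q Fl i j + 1 := by
  obtain ⟨v, -, hstep⟩ := exists_step Fl hi
  have key : ∀ m : ℕ, Rk p q Fl (i + 1) m
      = finrank ℂ ↥(((FF Fl i).map (projE (p + q) p) ⊔ FF Fl m) ⊔ (ℂ ∙ (projE (p + q) p v))) := by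
    intro m
    unfold Rk
    rw [hstep, map_sup_span, sup_right_comm]
  have hnotmem : projE (p + q) p v ∉ (FF Fl i).map (projE (p + q) p) ⊔ FF Fl j' := by
    intro hmem
    rw [key j', sup_span_of_mem _ hmem] at h
    exact lt_irrefl _ h
  have hnotmem' : projE (p + q) p v ∉ (FF Fl i).map (projE (p + q) p) ⊔ FF Fl j := by
    intro hmem
    exact hnotmem (sup_le_sup_left (FF_mono Fl hjj) _ hmem)
  rw [key j, finrank_sup_span_of_not_mem _ hnotmem']
  rfl

lemma rho_map_sup (G : Submodule ℂ (Fin (p + q) → ℂ)) :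
    G.map (projE (p + q) p) ⊔ G = G.map (rhoE (p + q) p) ⊔ G := by
  apply le_antisymm
  · refine sup_le ?_ le_sup_right
    rintro x ⟨g, hg, rfl⟩
    have : projE (p + q) p g = g - rhoE (p + q) p g := by
      have := projE_add_rhoE (p + q) p g
      abel_nf
      linear_combination (norm := abel) this
    rw [this]
    exact Submodule.sub_mem _ (Submodule.mem_sup_right hg)
      (Submodule.mem_sup_left ⟨g, hg, rfl⟩)
  · refine sup_le ?_ le_sup_right
    rintro x ⟨g, hg, rfl⟩
    have : rhoE (p + q) p g = g - projE (p + q) p g := by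
      have := projE_add_rhoE (p + q) p g
      linear_combination (norm := abel) this
    rw [this]
    exact Submodule.sub_mem _ (Submodule.mem_sup_right hg)
      (Submodule.mem_sup_left ⟨g, hg, rfl⟩)

lemma rho_map_inf (G : Submodule ℂ (Fin (p + q) → ℂ)) :
    G.map (rhoE (p + q) p) ⊓ G = (G ⊓ Elast (p + q) q) := by
  apply le_antisymm
  · rintro x ⟨⟨g, hg, rfl⟩, hx⟩
    exact ⟨hx, rhoE_mem_Elast _⟩
  · rintro x ⟨hxG, hxE⟩
    exact ⟨⟨x, hxG, rhoE_eq_self_of_mem_Elast hxE⟩, hxG⟩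

/-- `R(i,i) + a(i) + b(i) = 2i`. -/
lemma Rk_diag {i : ℕ} (hi : i ≤ p + q) :
    Rk p q Fl i i + finrank ℂ ↥(FF Fl i ⊓ Efirst (p + q) p)
      + finrank ℂ ↥(FF Fl i ⊓ Elast (p + q) q) = 2 * i := by
  set G := FF Fl i with hG
  have hrn : finrank ℂ ↥(G.map (rhoE (p + q) p)) + finrank ℂ ↥(G ⊓ Efirst (p + q) p)
      = finrank ℂ G := by
    have := finrank_map_add_finrank_inf_ker (rhoE (p + q) p) G
    rwa [ker_rhoE] at this
  have hsupinf := Submodule.finrank_sup_add_finrank_inf_eq (G.map (rhoE (p + q) p)) G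
  rw [rho_map_inf] at hsupinf
  have hRk : Rk p q Fl i i = finrank ℂ ↥(G.map (rhoE (p + q) p) ⊔ G) := by
    unfold Rk
    rw [← hG, rho_map_sup]
  have hfr : finrank ℂ G = i := finrank_FF Fl hi
  omega

end RkFacts

/-! ### The sign-position steps -/

section SignStep

variable {p q : ℕ} (Fl : CompleteFlag (p + q))

lemma Rk_step_of_not_le {k : ℕ} (hk : k < p + q)
    (h : ¬ FF Fl (k + 1) ≤ (FF Fl k).map (projE (p + q) p) ⊔ FF Fl k) :
    Rk p q Fl k (k + 1) = Rk p q Fl k k + 1 := by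
  have hle : Rk p q Fl k (k + 1) ≤ Rk p q Fl k k + 1 := (Rk_mono_right Fl k hk).2
  have hlt : Rk p q Fl k k < Rk p q Fl k (k + 1) := by
    apply Submodule.finrank_lt_finrank_of_lt
    refine lt_of_le_of_ne (sup_le_sup_left (FF_mono Fl ((by omega : k ≤ k + 1))) _) (fun he => ?_)
    exact h (he ▸ le_sup_right)
  omega

lemma Rk_sign_plus {k : ℕ} (hk : k < p + q)
    (ha : finrank ℂ ↥(FF Fl (k + 1) ⊓ Efirst (p + q) p)
        = finrank ℂ ↥(FF Fl k ⊓ Efirst (p + q) p) + 1)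
    (hb : finrank ℂ ↥(FF Fl (k + 1) ⊓ Elast (p + q) q)
        = finrank ℂ ↥(FF Fl k ⊓ Elast (p + q) q)) :
    Rk p q Fl k (k + 1) = Rk p q Fl k k + 1 := by
  apply Rk_step_of_not_le Fl hk
  intro hsub
  -- pick `v ∈ (F_{k+1} ⊓ E_p) \ (F_k ⊓ E_p)`
  have hlt : FF Fl k ⊓ Efirst (p + q) p < FF Fl (k + 1) ⊓ Efirst (p + q) p := by
    refine lt_of_le_of_ne (inf_le_inf_right _ (FF_mono Fl ((by omega : k ≤ k + 1)))) (fun he => ?_)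
    rw [he] at ha
    omega
  obtain ⟨v, hv1, hv2⟩ := SetLike.exists_of_lt hlt
  have hvF : v ∈ FF Fl (k + 1) := hv1.1
  have hvE : v ∈ Efirst (p + q) p := hv1.2
  obtain ⟨y, hy, z, hz, hyz⟩ := Submodule.mem_sup.1 (hsub hvF)
  obtain ⟨g, hg, rfl⟩ := hy
  -- `w = ρ(g) ∈ F_{k+1} ⊓ Ẽ_q = F_k ⊓ Ẽ_q`
  set w := rhoE (p + q) p g with hw
  have hwF : w ∈ FF Fl (k + 1) := by
    have : w = g + z - v := by
      have hpr := projE_add_rhoE (p + q) p g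
      rw [← hyz]
      linear_combination (norm := abel) hpr
    rw [this]
    exact Submodule.sub_mem _
      (Submodule.add_mem _ (FF_mono Fl ((by omega : k ≤ k + 1)) hg) (FF_mono Fl ((by omega : k ≤ k + 1)) hz)) hvF
  have heq : FF Fl k ⊓ Elast (p + q) q = FF Fl (k + 1) ⊓ Elast (p + q) q := by
    apply Submodule.eq_of_le_of_finrank_le (inf_le_inf_right _ (FF_mono Fl ((by omega : k ≤ k + 1))))
    omega
  have hwFk : w ∈ FF Fl k := by
    have : w ∈ FF Fl (k + 1) ⊓ Elast (p + q) q := ⟨hwF, rhoE_mem_Elast g⟩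
    rw [← heq] at this
    exact this.1
  have hπg : projE (p + q) p g ∈ FF Fl k := by
    have : projE (p + q) p g = g - w := by
      have hpr := projE_add_rhoE (p + q) p g
      linear_combination (norm := abel) hpr
    rw [this]
    exact Submodule.sub_mem _ hg hwFk
  have hvFk : v ∈ FF Fl k := by
    rw [← hyz]
    exact Submodule.add_mem _ hπg hz
  exact hv2 ⟨hvFk, hvE⟩

lemma Rk_sign_minus {k : ℕ} (hk : k < p + q)
    (ha : finrank ℂ ↥(FF Fl (k + 1) ⊓ Efirst (p + q) p)
        = finrank ℂ ↥(FF Fl k ⊓ Efirst (p + q) p))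
    (hb : finrank ℂ ↥(FF Fl (k + 1) ⊓ Elast (p + q) q)
        = finrank ℂ ↥(FF Fl k ⊓ Elast (p + q) q) + 1) :
    Rk p q Fl k (k + 1) = Rk p q Fl k k + 1 := by
  apply Rk_step_of_not_le Fl hk
  intro hsub
  have hlt : FF Fl k ⊓ Elast (p + q) q < FF Fl (k + 1) ⊓ Elast (p + q) q := by
    refine lt_of_le_of_ne (inf_le_inf_right _ (FF_mono Fl ((by omega : k ≤ k + 1)))) (fun he => ?_)
    rw [he] at hb
    omega
  obtain ⟨v, hv1, hv2⟩ := SetLike.exists_of_lt hlt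
  have hvF : v ∈ FF Fl (k + 1) := hv1.1
  have hvE : v ∈ Elast (p + q) q := hv1.2
  obtain ⟨y, hy, z, hz, hyz⟩ := Submodule.mem_sup.1 (hsub hvF)
  obtain ⟨g, hg, rfl⟩ := hy
  have hπF : projE (p + q) p g ∈ FF Fl (k + 1) := by
    have : projE (p + q) p g = v - z := by linear_combination (norm := abel) hyz
    rw [this]
    exact Submodule.sub_mem _ hvF (FF_mono Fl ((by omega : k ≤ k + 1)) hz)
  have heq : FF Fl k ⊓ Efirst (p + q) p = FF Fl (k + 1) ⊓ Efirst (p + q) p := by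
    apply Submodule.eq_of_le_of_finrank_le (inf_le_inf_right _ (FF_mono Fl ((by omega : k ≤ k + 1))))
    omega
  have hπFk : projE (p + q) p g ∈ FF Fl k := by
    have : projE (p + q) p g ∈ FF Fl (k + 1) ⊓ Efirst (p + q) p :=
      ⟨hπF, projE_mem_Efirst _ _ g⟩
    rw [← heq] at this
    exact this.1
  have hvFk : v ∈ FF Fl k := by
    rw [← hyz]
    exact Submodule.add_mem _ hπFk hz
  exact hv2 ⟨hvFk, hvE⟩

end SignStep

/-! ### Steps of the rank function along the diagonal, from the hypothesis -/

section DiagStep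

variable {p q : ℕ} (Fl : CompleteFlag (p + q)) (γ : Clan p q)
variable (H : ∀ i : ℕ, 1 ≤ i → ∀ hi : i ≤ p + q,
    finrank ℂ ↥(Fl.F ⟨i, by omega⟩ ⊓ Efirst (p + q) p) = γ.cplus i ∧
    finrank ℂ ↥(Fl.F ⟨i, by omega⟩ ⊓ Elast (p + q) q) = γ.cminus i)

include H

lemma hyp_A {i : ℕ} (hi : i ≤ p + q) :
    finrank ℂ ↥(FF Fl i ⊓ Efirst (p + q) p) = γ.cplus i := by
  rcases Nat.eq_zero_or_pos i with h | h
  · subst h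
    rw [FF_zero, bot_inf_eq, finrank_bot, γ.cplus_zero]
  · rw [FF_eq Fl hi]
    exact (H i h hi).1

lemma hyp_B {i : ℕ} (hi : i ≤ p + q) :
    finrank ℂ ↥(FF Fl i ⊓ Elast (p + q) q) = γ.cminus i := by
  rcases Nat.eq_zero_or_pos i with h | h
  · subst h
    rw [FF_zero, bot_inf_eq, finrank_bot, γ.cminus_zero]
  · rw [FF_eq Fl hi]
    exact (H i h hi).2

lemma Rk_offdiag {k : ℕ} (hk : k < p + q) :
    Rk p q Fl k (k + 1) = Rk p q Fl k k
      + (if γ.FS ⟨k, hk⟩ = FSSymbol.snd then 0 else 1) := by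
  have ha0 := hyp_A Fl γ H (show k ≤ p + q by omega)
  have ha1 := hyp_A Fl γ H (show k + 1 ≤ p + q by omega)
  have hb0 := hyp_B Fl γ H (show k ≤ p + q by omega)
  have hb1 := hyp_B Fl γ H (show k + 1 ≤ p + q by omega)
  have hd0 := Rk_diag Fl (show k ≤ p + q by omega)
  have hd1 := Rk_diag Fl (show k + 1 ≤ p + q by omega)
  have hsp := γ.cplus_succ k hk
  have hsm := γ.cminus_succ k hk
  have hmr := Rk_mono_right Fl k hk
  have hml := Rk_mono_left Fl (k + 1) hk
  cases hFS : γ.FS ⟨k, hk⟩ with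
  | plus =>
    simp only [hFS] at hsp hsm
    simp only [reduceCtorEq, or_self, if_false, false_or, if_true, or_false] at hsp hsm
    have hsign := Rk_sign_plus Fl hk (by omega) (by omega)
    simp only [reduceCtorEq, if_false]
    omega
  | minus =>
    simp only [hFS] at hsp hsm
    simp only [reduceCtorEq, or_self, if_false, false_or, if_true, or_false] at hsp hsm
    have hsign := Rk_sign_minus Fl hk (by omega) (by omega)
    simp only [reduceCtorEq, if_false]
    omega
  | fst =>
    simp only [hFS] at hsp hsm
    simp only [reduceCtorEq, or_self, if_false, false_or, if_true, or_false] at hsp hsm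
    simp only [reduceCtorEq, if_false]
    omega
  | snd =>
    simp only [hFS] at hsp hsm
    simp only [reduceCtorEq, or_self, if_false, false_or, if_true, or_false] at hsp hsm
    simp only [if_true]
    omega

lemma Rk_diagstep {k : ℕ} (hk : k < p + q) :
    Rk p q Fl (k + 1) (k + 1) = Rk p q Fl k (k + 1)
      + (if γ.FS ⟨k, hk⟩ = FSSymbol.fst then 1 else 0) := by
  have ha0 := hyp_A Fl γ H (show k ≤ p + q by omega)
  have ha1 := hyp_A Fl γ H (show k + 1 ≤ p + q by omega)
  have hb0 := hyp_B Fl γ H (show k ≤ p + q by omega)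
  have hb1 := hyp_B Fl γ H (show k + 1 ≤ p + q by omega)
  have hd0 := Rk_diag Fl (show k ≤ p + q by omega)
  have hd1 := Rk_diag Fl (show k + 1 ≤ p + q by omega)
  have hsp := γ.cplus_succ k hk
  have hsm := γ.cminus_succ k hk
  have hod := Rk_offdiag Fl γ H hk
  cases hFS : γ.FS ⟨k, hk⟩ with
  | plus =>
    simp only [hFS, reduceCtorEq, or_self, if_false, false_or, if_true, or_false] at hsp hsm hod
    simp only [reduceCtorEq, if_false]
    omega
  | minus =>
    simp only [hFS, reduceCtorEq, or_self, if_false, false_or, if_true, or_false] at hsp hsm hod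
    simp only [reduceCtorEq, if_false]
    omega
  | fst =>
    simp only [hFS, reduceCtorEq, or_self, if_false, false_or, if_true, or_false] at hsp hsm hod
    simp only [if_true]
    omega
  | snd =>
    simp only [hFS, reduceCtorEq, or_self, if_false, false_or, if_true, or_false] at hsp hsm hod
    simp only [reduceCtorEq, if_false]
    omega

end DiagStep

/-! ### Telescoping and counting helpers -/

lemma sum_Ico_telescope (F : ℕ → ℤ) : ∀ {a b : ℕ}, a ≤ b →
    ∑ t ∈ Ico (a + 1) (b + 1), (F (t - 1) - F t) = F a - F b := by
  intro a b
  induction b with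
  | zero =>
    intro hab
    have : a = 0 := by omega
    subst this
    simp
  | succ b ih =>
    intro hab
    rcases Nat.lt_or_ge a (b + 1) with h | h
    · have hab' : a ≤ b := by omega
      rw [Finset.sum_Ico_succ_top (by omega : a + 1 ≤ b + 1), ih hab']
      have e : (b + 1 : ℕ) - 1 = b := by omega
      rw [e]
      ring
    · have : a = b + 1 := by omega
      subst this
      simp

lemma sum_fin_shift {n : ℕ} (a b : ℕ) (hb : b ≤ n) (g : ℕ → ℤ) :
    ∑ t ∈ univ.filter (fun t : Fin n => a ≤ t.val ∧ t.val < b), g (t.val + 1)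
      = ∑ t ∈ Ico (a + 1) (b + 1), g t := by
  have h1 : ∑ t ∈ univ.filter (fun t : Fin n => a ≤ t.val ∧ t.val < b), g (t.val + 1)
      = ∑ t : Fin n, (fun u : ℕ => if a ≤ u ∧ u < b then g (u + 1) else 0) t.val := by
    rw [Finset.sum_filter]
  rw [h1, Fin.sum_univ_eq_sum_range (fun u : ℕ => if a ≤ u ∧ u < b then g (u + 1) else 0) n,
    ← Finset.sum_filter]
  have h2 : (Finset.range n).filter (fun u => a ≤ u ∧ u < b) = Ico a b := by
    ext u
    simp only [mem_filter, Finset.mem_range, mem_Ico]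
    omega
  rw [h2, Finset.sum_Ico_eq_sum_range, Finset.sum_Ico_eq_sum_range]
  have h3 : b + 1 - (a + 1) = b - a := by omega
  rw [h3]
  apply Finset.sum_congr rfl
  intro i _
  congr 1
  omega

lemma card_fin_shift {n : ℕ} (a b : ℕ) (hb : b ≤ n) (f : ℕ → ℤ)
    (h01 : ∀ t, a < t → t ≤ b → f t = 0 ∨ f t = 1) :
    ((univ.filter (fun t : Fin n => a ≤ t.val ∧ t.val < b ∧ f (t.val + 1) = 1)).card : ℤ)
      = ∑ t ∈ Ico (a + 1) (b + 1), f t := by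
  have h1 : ((univ.filter (fun t : Fin n => a ≤ t.val ∧ t.val < b ∧ f (t.val + 1) = 1)).card : ℤ)
      = ∑ t ∈ univ.filter (fun t : Fin n => a ≤ t.val ∧ t.val < b),
          (fun u : ℕ => if f u = 1 then (1 : ℤ) else 0) (t.val + 1) := by
    rw [Finset.sum_filter]
    rw [Finset.card_filter]
    push_cast
    apply Finset.sum_congr rfl
    intro t _
    by_cases h : a ≤ t.val ∧ t.val < b ∧ f (t.val + 1) = 1
    · rw [if_pos h, if_pos ⟨h.1, h.2.1⟩, if_pos h.2.2]
    · rw [if_neg h]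
      by_cases h2 : a ≤ t.val ∧ t.val < b
      · rw [if_pos h2, if_neg (fun hf => h ⟨h2.1, h2.2, hf⟩)]
      · rw [if_neg h2]
  rw [h1, sum_fin_shift a b hb (fun u : ℕ => if f u = 1 then (1 : ℤ) else 0)]
  apply Finset.sum_congr rfl
  intro t ht
  rw [mem_Ico] at ht
  rcases h01 t (by omega) (by omega) with h | h
  · rw [if_neg (by omega), h]
  · rw [if_pos h, h]

/-! ### The arc-counting function `m(s,t)` -/

/-- `m(s,t)` (1-based `s < t`): the number (0 or 1) of arcs of the matching
determined by the flag opening at `s` and closing at `t`. -/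
def mZ (p q : ℕ) (Fl : CompleteFlag (p + q)) (s t : ℕ) : ℤ :=
  (Rk p q Fl s (t - 1) : ℤ) - Rk p q Fl (s - 1) (t - 1)
    - Rk p q Fl s t + Rk p q Fl (s - 1) t

section MZ

variable {p q : ℕ} (Fl : CompleteFlag (p + q))

lemma mZ_bounds {s t : ℕ} (hs : 1 ≤ s) (hst : s < t) (ht : t ≤ p + q) :
    0 ≤ mZ p q Fl s t ∧ mZ p q Fl s t ≤ 1 := by
  have es : s - 1 + 1 = s := by omega
  have et : t - 1 + 1 = t := by omega
  have h1 := Rk_mono_left Fl (t - 1) (show s - 1 < p + q by omega)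
  rw [es] at h1
  have h2 := Rk_mono_left Fl t (show s - 1 < p + q by omega)
  rw [es] at h2
  constructor
  · by_cases hc : Rk p q Fl (s - 1) t < Rk p q Fl s t
    · have hc' : Rk p q Fl (s - 1) t < Rk p q Fl (s - 1 + 1) t := by
        rw [es]; exact hc
      have hsub := Rk_submodular Fl (show s - 1 < p + q by omega)
        (show t - 1 ≤ t by omega) hc'
      rw [es] at hsub
      unfold mZ
      omega
    · unfold mZ
      omega
  · unfold mZ
    omega

lemma mZ_rowsum {s : ℕ} (hs : 1 ≤ s) (hsn : s ≤ p + q) :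
    ∑ t ∈ Ico (s + 1) (p + q + 1), mZ p q Fl s t
      = (Rk p q Fl s s : ℤ) - Rk p q Fl (s - 1) s := by
  have htel := sum_Ico_telescope
    (fun u => (Rk p q Fl s u : ℤ) - Rk p q Fl (s - 1) u) hsn
  have hterm : ∑ t ∈ Ico (s + 1) (p + q + 1), mZ p q Fl s t
      = ∑ t ∈ Ico (s + 1) (p + q + 1),
          ((fun u => (Rk p q Fl s u : ℤ) - Rk p q Fl (s - 1) u) (t - 1)
            - (fun u => (Rk p q Fl s u : ℤ) - Rk p q Fl (s - 1) u) t) := by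
    apply Finset.sum_congr rfl
    intro t _
    unfold mZ
    ring
  rw [hterm, htel]
  rw [Rk_right_top, Rk_right_top]
  ring

lemma mZ_colsum {t : ℕ} (ht : 1 ≤ t) (htn : t ≤ p + q) :
    ∑ s ∈ Ico 1 t, mZ p q Fl s t
      = 1 - ((Rk p q Fl (t - 1) t : ℤ) - Rk p q Fl (t - 1) (t - 1)) := by
  have htel := sum_Ico_telescope
    (fun u => (Rk p q Fl u t : ℤ) - Rk p q Fl u (t - 1)) (show 0 ≤ t - 1 by omega)
  rw [show (0 : ℕ) + 1 = 1 from rfl, show t - 1 + 1 = t by omega] at htel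
  have hterm : ∑ s ∈ Ico 1 t, mZ p q Fl s t
      = ∑ s ∈ Ico 1 t,
          ((fun u => (Rk p q Fl u t : ℤ) - Rk p q Fl u (t - 1)) (s - 1)
            - (fun u => (Rk p q Fl u t : ℤ) - Rk p q Fl u (t - 1)) s) := by
    apply Finset.sum_congr rfl
    intro s _
    unfold mZ
    ring
  rw [hterm, htel]
  rw [Rk_zero_left Fl htn, Rk_zero_left Fl (show t - 1 ≤ p + q by omega)]
  omega

lemma mZ_regionsum {i j : ℕ} (hi : 1 ≤ i) (hij : i < j) (hj : j ≤ p + q) :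
    ∑ s ∈ Ico 1 (i + 1), ∑ t ∈ Ico (j + 1) (p + q + 1), mZ p q Fl s t
      = (Rk p q Fl i j : ℤ) - j := by
  have hinner : ∀ s ∈ Ico 1 (i + 1),
      ∑ t ∈ Ico (j + 1) (p + q + 1), mZ p q Fl s t
        = (Rk p q Fl s j : ℤ) - Rk p q Fl (s - 1) j := by
    intro s hs
    have htel := sum_Ico_telescope
      (fun u => (Rk p q Fl s u : ℤ) - Rk p q Fl (s - 1) u) (show j ≤ p + q by omega)
    have hterm : ∑ t ∈ Ico (j + 1) (p + q + 1), mZ p q Fl s t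
        = ∑ t ∈ Ico (j + 1) (p + q + 1),
            ((fun u => (Rk p q Fl s u : ℤ) - Rk p q Fl (s - 1) u) (t - 1)
              - (fun u => (Rk p q Fl s u : ℤ) - Rk p q Fl (s - 1) u) t) := by
      apply Finset.sum_congr rfl
      intro t _
      unfold mZ
      ring
    rw [hterm, htel]
    rw [Rk_right_top, Rk_right_top]
    ring
  rw [Finset.sum_congr rfl hinner]
  have htel := sum_Ico_telescope (fun u => -(Rk p q Fl u j : ℤ)) (show 0 ≤ i by omega)
  rw [show (0 : ℕ) + 1 = 1 from rfl] at htel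
  have hterm : ∑ s ∈ Ico 1 (i + 1), ((Rk p q Fl s j : ℤ) - Rk p q Fl (s - 1) j)
      = ∑ s ∈ Ico 1 (i + 1),
          ((fun u => -(Rk p q Fl u j : ℤ)) (s - 1) - (fun u => -(Rk p q Fl u j : ℤ)) s) := by
    apply Finset.sum_congr rfl
    intro s _
    ring
  rw [hterm, htel]
  rw [Rk_zero_left Fl (show j ≤ p + q by omega)]
  ring

end MZ

/-! ### The matching determined by the flag, and the clan it defines -/

/-- The set of positions matched to `k` by the matching determined by the flag. -/
def mateSet (p q : ℕ) (Fl : CompleteFlag (p + q)) (k : Fin (p + q)) : Finset (Fin (p + q)) :=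
  univ.filter fun t =>
    (k < t ∧ mZ p q Fl (k.val + 1) (t.val + 1) = 1) ∨
    (t < k ∧ mZ p q Fl (t.val + 1) (k.val + 1) = 1)

section Matching

variable {p q : ℕ} (Fl : CompleteFlag (p + q)) (γ : Clan p q)
variable (H : ∀ i : ℕ, 1 ≤ i → ∀ hi : i ≤ p + q,
    finrank ℂ ↥(Fl.F ⟨i, by omega⟩ ⊓ Efirst (p + q) p) = γ.cplus i ∧
    finrank ℂ ↥(Fl.F ⟨i, by omega⟩ ⊓ Elast (p + q) q) = γ.cminus i)

lemma mem_mateSet_iff {k t : Fin (p + q)} :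
    t ∈ mateSet p q Fl k ↔
      (k < t ∧ mZ p q Fl (k.val + 1) (t.val + 1) = 1) ∨
      (t < k ∧ mZ p q Fl (t.val + 1) (k.val + 1) = 1) := by
  simp [mateSet]

lemma mateSet_symm {k t : Fin (p + q)} :
    t ∈ mateSet p q Fl k ↔ k ∈ mateSet p q Fl t := by
  rw [mem_mateSet_iff, mem_mateSet_iff]
  tauto

lemma mem_mateSet_ne {k t : Fin (p + q)} (ht : t ∈ mateSet p q Fl k) : t ≠ k := by
  rw [mem_mateSet_iff] at ht
  rcases ht with ⟨h, -⟩ | ⟨h, -⟩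
  · exact (ne_of_gt h)
  · exact (ne_of_lt h)

include H

lemma rowcard (k : Fin (p + q)) :
    (univ.filter fun t : Fin (p + q) =>
        k < t ∧ mZ p q Fl (k.val + 1) (t.val + 1) = 1).card
      = if γ.FS k = FSSymbol.fst then 1 else 0 := by
  have h01 : ∀ t, k.val + 1 < t → t ≤ p + q →
      mZ p q Fl (k.val + 1) t = 0 ∨ mZ p q Fl (k.val + 1) t = 1 := by
    intro t h1 h2
    have := mZ_bounds Fl (show 1 ≤ k.val + 1 by omega) h1 h2
    omega
  have hshift := card_fin_shift (n := p + q) (k.val + 1) (p + q) le_rfl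
    (fun t => mZ p q Fl (k.val + 1) t) h01
  have hfe : (univ.filter fun t : Fin (p + q) =>
        k < t ∧ mZ p q Fl (k.val + 1) (t.val + 1) = 1)
      = (univ.filter fun t : Fin (p + q) =>
        k.val + 1 ≤ t.val ∧ t.val < p + q ∧ mZ p q Fl (k.val + 1) (t.val + 1) = 1) := by
    apply Finset.filter_congr
    intro t _
    rw [Fin.lt_def]
    constructor
    · rintro ⟨h1, h2⟩
      exact ⟨by omega, t.isLt, h2⟩
    · rintro ⟨h1, h2, h3⟩
      exact ⟨by omega, h3⟩
  have hrow := mZ_rowsum Fl (show 1 ≤ k.val + 1 by omega) (show k.val + 1 ≤ p + q by omega)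
  have hds := Rk_diagstep Fl γ H k.isLt
  have hsimp : (k.val + 1 - 1 : ℕ) = k.val := by omega
  rw [hsimp] at hrow
  have hk : (⟨k.val, k.isLt⟩ : Fin (p + q)) = k := rfl
  rw [hk] at hds
  rw [hfe]
  have : ((univ.filter fun t : Fin (p + q) =>
        k.val + 1 ≤ t.val ∧ t.val < p + q ∧ mZ p q Fl (k.val + 1) (t.val + 1) = 1).card : ℤ)
      = if γ.FS k = FSSymbol.fst then 1 else 0 := by
    rw [hshift, hrow]
    split_ifs with h <;> simp [h] at hds <;> omega
  split_ifs at this ⊢ <;> omega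

lemma colcard (k : Fin (p + q)) :
    (univ.filter fun s : Fin (p + q) =>
        s < k ∧ mZ p q Fl (s.val + 1) (k.val + 1) = 1).card
      = if γ.FS k = FSSymbol.snd then 1 else 0 := by
  have h01 : ∀ s, 0 < s → s ≤ k.val →
      mZ p q Fl s (k.val + 1) = 0 ∨ mZ p q Fl s (k.val + 1) = 1 := by
    intro s h1 h2
    have := mZ_bounds Fl (show 1 ≤ s by omega) (show s < k.val + 1 by omega)
      (show k.val + 1 ≤ p + q by omega)
    omega
  have hshift := card_fin_shift (n := p + q) 0 k.val (by omega)
    (fun s => mZ p q Fl s (k.val + 1)) h01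
  have hfe : (univ.filter fun s : Fin (p + q) =>
        s < k ∧ mZ p q Fl (s.val + 1) (k.val + 1) = 1)
      = (univ.filter fun s : Fin (p + q) =>
        0 ≤ s.val ∧ s.val < k.val ∧ mZ p q Fl (s.val + 1) (k.val + 1) = 1) := by
    apply Finset.filter_congr
    intro s _
    rw [Fin.lt_def]
    constructor
    · rintro ⟨h1, h2⟩
      exact ⟨by omega, h1, h2⟩
    · rintro ⟨h1, h2, h3⟩
      exact ⟨h2, h3⟩
  have hcol := mZ_colsum Fl (show 1 ≤ k.val + 1 by omega) (show k.val + 1 ≤ p + q by omega)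
  have hod := Rk_offdiag Fl γ H k.isLt
  have hsimp : (k.val + 1 - 1 : ℕ) = k.val := by omega
  rw [hsimp] at hcol
  have hk : (⟨k.val, k.isLt⟩ : Fin (p + q)) = k := rfl
  rw [hk] at hod
  rw [hfe]
  have : ((univ.filter fun s : Fin (p + q) =>
        0 ≤ s.val ∧ s.val < k.val ∧ mZ p q Fl (s.val + 1) (k.val + 1) = 1).card : ℤ)
      = if γ.FS k = FSSymbol.snd then 1 else 0 := by
    rw [hshift]
    rw [show (0 : ℕ) + 1 = 1 from rfl] at *
    rw [hcol]
    split_ifs with h <;> simp [h] at hod <;> omega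
  split_ifs at this ⊢ <;> omega

lemma mateSet_card (k : Fin (p + q)) :
    (mateSet p q Fl k).card
      = if γ.FS k = FSSymbol.fst ∨ γ.FS k = FSSymbol.snd then 1 else 0 := by
  have hsplit : mateSet p q Fl k
      = (univ.filter fun t : Fin (p + q) =>
          k < t ∧ mZ p q Fl (k.val + 1) (t.val + 1) = 1)
        ∪ (univ.filter fun t : Fin (p + q) =>
          t < k ∧ mZ p q Fl (t.val + 1) (k.val + 1) = 1) := by
    unfold mateSet
    rw [← Finset.filter_or]
  have hdisj : Disjoint
      (univ.filter fun t : Fin (p + q) =>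
          k < t ∧ mZ p q Fl (k.val + 1) (t.val + 1) = 1)
      (univ.filter fun t : Fin (p + q) =>
          t < k ∧ mZ p q Fl (t.val + 1) (k.val + 1) = 1) := by
    rw [Finset.disjoint_filter]
    rintro t _ ⟨h1, -⟩ ⟨h2, -⟩
    exact absurd (h1.trans h2) (lt_irrefl k)
  rw [hsplit, Finset.card_union_of_disjoint hdisj, rowcard Fl γ H k, colcard Fl γ H k]
  rcases hFS : γ.FS k <;> simp [hFS]

lemma mem_mateSet_cases {k t : Fin (p + q)} (ht : t ∈ mateSet p q Fl k) :
    (γ.FS k = FSSymbol.fst ∧ k < t ∧ mZ p q Fl (k.val + 1) (t.val + 1) = 1) ∨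
    (γ.FS k = FSSymbol.snd ∧ t < k ∧ mZ p q Fl (t.val + 1) (k.val + 1) = 1) := by
  rw [mem_mateSet_iff] at ht
  rcases ht with ⟨h1, h2⟩ | ⟨h1, h2⟩
  · left
    refine ⟨?_, h1, h2⟩
    by_contra hc
    have hcard := rowcard Fl γ H k
    rw [if_neg hc, Finset.card_eq_zero] at hcard
    have : t ∈ (univ.filter fun t : Fin (p + q) =>
        k < t ∧ mZ p q Fl (k.val + 1) (t.val + 1) = 1) := by
      simp only [mem_filter, mem_univ, true_and]
      exact ⟨h1, h2⟩
    rw [hcard] at this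
    exact absurd this (Finset.notMem_empty t)
  · right
    refine ⟨?_, h1, h2⟩
    by_contra hc
    have hcard := colcard Fl γ H k
    rw [if_neg hc, Finset.card_eq_zero] at hcard
    have : t ∈ (univ.filter fun s : Fin (p + q) =>
        s < k ∧ mZ p q Fl (s.val + 1) (k.val + 1) = 1) := by
      simp only [mem_filter, mem_univ, true_and]
      exact ⟨h1, h2⟩
    rw [hcard] at this
    exact absurd this (Finset.notMem_empty t)

lemma mateSet_unique {k : Fin (p + q)} {t t' : Fin (p + q)}
    (ht : t ∈ mateSet p q Fl k) (ht' : t' ∈ mateSet p q Fl k) : t = t' := by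
  have hcard := mateSet_card Fl γ H k
  have hle : (mateSet p q Fl k).card ≤ 1 := by
    rw [hcard]; split_ifs <;> omega
  exact Finset.card_le_one.mp hle t ht t' ht'

lemma mateSet_fs {k t : Fin (p + q)} (ht : t ∈ mateSet p q Fl k) :
    γ.FS k = FSSymbol.fst ∨ γ.FS k = FSSymbol.snd := by
  rcases mem_mateSet_cases Fl γ H ht with ⟨h, -⟩ | ⟨h, -⟩
  · exact Or.inl h
  · exact Or.inr h

end Matching

/-- The symbol function of the clan determined by the flag. -/
noncomputable def lamSymbol (p q : ℕ) (Fl : CompleteFlag (p + q)) (γ : Clan p q)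
    (k : Fin (p + q)) : Fin (p + q) ⊕ Bool :=
  if γ.FS k = FSSymbol.plus then Sum.inr true
  else if γ.FS k = FSSymbol.minus then Sum.inr false
  else if h : (mateSet p q Fl k).Nonempty then Sum.inl h.choose
  else Sum.inr true

section LamSymbol

variable {p q : ℕ} (Fl : CompleteFlag (p + q)) (γ : Clan p q)
variable (H : ∀ i : ℕ, 1 ≤ i → ∀ hi : i ≤ p + q,
    finrank ℂ ↥(Fl.F ⟨i, by omega⟩ ⊓ Efirst (p + q) p) = γ.cplus i ∧
    finrank ℂ ↥(Fl.F ⟨i, by omega⟩ ⊓ Elast (p + q) q) = γ.cminus i)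

lemma lamSymbol_plus {k : Fin (p + q)} (h : γ.FS k = FSSymbol.plus) :
    lamSymbol p q Fl γ k = Sum.inr true := by
  unfold lamSymbol
  rw [if_pos h]

lemma lamSymbol_minus {k : Fin (p + q)} (h : γ.FS k = FSSymbol.minus) :
    lamSymbol p q Fl γ k = Sum.inr false := by
  unfold lamSymbol
  rw [if_neg (by simp [h]), if_pos h]

include H

lemma lamSymbol_arc {k : Fin (p + q)}
    (h : γ.FS k = FSSymbol.fst ∨ γ.FS k = FSSymbol.snd) :
    ∃ t, t ∈ mateSet p q Fl k ∧ lamSymbol p q Fl γ k = Sum.inl t := by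
  have hcard := mateSet_card Fl γ H k
  rw [if_pos h] at hcard
  have hne : (mateSet p q Fl k).Nonempty := Finset.card_pos.mp (by omega)
  refine ⟨hne.choose, hne.choose_spec, ?_⟩
  unfold lamSymbol
  rw [if_neg (by rcases h with h | h <;> simp [h]),
    if_neg (by rcases h with h | h <;> simp [h]), dif_pos hne]

lemma lamSymbol_eq_inl_iff (k t : Fin (p + q)) :
    lamSymbol p q Fl γ k = Sum.inl t ↔ t ∈ mateSet p q Fl k := by
  constructor
  · intro h
    by_cases hfs : γ.FS k = FSSymbol.fst ∨ γ.FS k = FSSymbol.snd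
    · obtain ⟨t', ht', heq⟩ := lamSymbol_arc Fl γ H hfs
      rw [heq] at h
      obtain rfl : t' = t := by simpa using h
      exact ht'
    · push_neg at hfs
      rcases hFS : γ.FS k with _ | _ | _ | _
      · rw [lamSymbol_plus Fl γ hFS] at h; cases h
      · rw [lamSymbol_minus Fl γ hFS] at h; cases h
      · exact absurd hFS hfs.1
      · exact absurd hFS hfs.2
  · intro ht
    obtain ⟨t', ht', heq⟩ := lamSymbol_arc Fl γ H (mateSet_fs Fl γ H ht)
    rw [heq]
    rw [mateSet_unique Fl γ H ht' ht]

lemma lamSymbol_inr_iff (k : Fin (p + q)) (b : Bool) :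
    lamSymbol p q Fl γ k = Sum.inr b ↔ γ.symbol k = Sum.inr b := by
  rcases hFS : γ.FS k with _ | _ | _ | _
  · rw [lamSymbol_plus Fl γ hFS]
    rw [γ.FS_eq_plus_iff] at hFS
    rw [hFS]
  · rw [lamSymbol_minus Fl γ hFS]
    rw [γ.FS_eq_minus_iff] at hFS
    rw [hFS]
  · obtain ⟨t', _, heq⟩ := lamSymbol_arc Fl γ H (Or.inl hFS)
    obtain ⟨j, hj, -⟩ := (γ.FS_eq_fst_iff k).mp hFS
    rw [heq, hj]
    simp
  · obtain ⟨t', _, heq⟩ := lamSymbol_arc Fl γ H (Or.inr hFS)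
    obtain ⟨j, hj, -⟩ := (γ.FS_eq_snd_iff k).mp hFS
    rw [heq, hj]
    simp

/-- The clan determined by the flag. -/
noncomputable def lamClan : Clan p q where
  symbol := lamSymbol p q Fl γ
  mate_ne := fun i j h =>
    mem_mateSet_ne Fl ((lamSymbol_eq_inl_iff Fl γ H i j).mp h)
  mate_invol := fun i j h => by
    have hj : j ∈ mateSet p q Fl i := (lamSymbol_eq_inl_iff Fl γ H i j).mp h
    exact (lamSymbol_eq_inl_iff Fl γ H j i).mpr ((mateSet_symm Fl).mp hj)
  balance := by
    have e1 : (univ.filter fun i => lamSymbol p q Fl γ i = Sum.inr true)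
        = (univ.filter fun i => γ.symbol i = Sum.inr true) :=
      Finset.filter_congr fun k _ => lamSymbol_inr_iff Fl γ H k true
    have e2 : (univ.filter fun i => lamSymbol p q Fl γ i = Sum.inr false)
        = (univ.filter fun i => γ.symbol i = Sum.inr false) :=
      Finset.filter_congr fun k _ => lamSymbol_inr_iff Fl γ H k false
    show (univ.filter fun i => lamSymbol p q Fl γ i = Sum.inr true).card + q
        = (univ.filter fun i => lamSymbol p q Fl γ i = Sum.inr false).card + p
    rw [e1, e2]
    exact γ.balance

lemma lamClan_FS : (lamClan Fl γ H).FS = γ.FS := by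
  funext k
  have hsymb : (lamClan Fl γ H).symbol = lamSymbol p q Fl γ := rfl
  rcases hFS : γ.FS k with _ | _ | _ | _
  · rw [Clan.FS, hsymb, lamSymbol_plus Fl γ hFS]
  · rw [Clan.FS, hsymb, lamSymbol_minus Fl γ hFS]
  · obtain ⟨t, ht, heq⟩ := lamSymbol_arc Fl γ H (Or.inl hFS)
    have hkt : k < t := by
      rcases mem_mateSet_cases Fl γ H ht with ⟨-, h, -⟩ | ⟨h, -, -⟩
      · exact h
      · rw [hFS] at h; cases h
    rw [Clan.FS, hsymb, heq]
    simp [not_lt.mpr hkt.le]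
  · obtain ⟨t, ht, heq⟩ := lamSymbol_arc Fl γ H (Or.inr hFS)
    have hkt : t < k := by
      rcases mem_mateSet_cases Fl γ H ht with ⟨h, -, -⟩ | ⟨-, h, -⟩
      · rw [hFS] at h; cases h
      · exact h
    rw [Clan.FS, hsymb, heq]
    simp [hkt]

end LamSymbol

section CpairSec

variable {p q : ℕ} (Fl : CompleteFlag (p + q)) (γ : Clan p q)
variable (H : ∀ i : ℕ, 1 ≤ i → ∀ hi : i ≤ p + q,
    finrank ℂ ↥(Fl.F ⟨i, by omega⟩ ⊓ Efirst (p + q) p) = γ.cplus i ∧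
    finrank ℂ ↥(Fl.F ⟨i, by omega⟩ ⊓ Elast (p + q) q) = γ.cminus i)

include H

lemma inner_card {i j : ℕ} (hij : i < j) (s : Fin (p + q)) (hsi : s.val < i) :
    (univ.filter fun t : Fin (p + q) =>
        j ≤ t.val ∧ t.val < p + q ∧ mZ p q Fl (s.val + 1) (t.val + 1) = 1).card
      = if ∃ t : Fin (p + q), lamSymbol p q Fl γ s = Sum.inl t ∧ s < t ∧ j ≤ t.val
        then 1 else 0 := by
  split_ifs with hex
  · obtain ⟨t0, hlam, hst, hjt⟩ := hex
    have ht0 : t0 ∈ mateSet p q Fl s := (lamSymbol_eq_inl_iff Fl γ H s t0).mp hlam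
    have hm : mZ p q Fl (s.val + 1) (t0.val + 1) = 1 := by
      rcases (mem_mateSet_iff Fl).mp ht0 with ⟨-, h⟩ | ⟨hlt, -⟩
      · exact h
      · exact absurd (hst.trans hlt) (lt_irrefl s)
    rw [Finset.card_eq_one]
    refine ⟨t0, ?_⟩
    ext t
    simp only [mem_filter, mem_univ, true_and, Finset.mem_singleton]
    constructor
    · rintro ⟨hjt', -, hm'⟩
      have hstt : s < t := by
        rw [Fin.lt_def]; omega
      have htm : t ∈ mateSet p q Fl s := by
        rw [mem_mateSet_iff]
        exact Or.inl ⟨hstt, hm'⟩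
      have h2 := (lamSymbol_eq_inl_iff Fl γ H s t).mpr htm
      rw [hlam] at h2
      simpa using h2.symm
    · rintro rfl
      exact ⟨hjt, Fin.is_lt _, hm⟩
  · rw [Finset.card_eq_zero, Finset.filter_eq_empty_iff]
    rintro t -
    rintro ⟨hjt, -, hm⟩
    have hstt : s < t := by rw [Fin.lt_def]; omega
    have htm : t ∈ mateSet p q Fl s := by
      rw [mem_mateSet_iff]; exact Or.inl ⟨hstt, hm⟩
    exact hex ⟨t, (lamSymbol_eq_inl_iff Fl γ H s t).mpr htm, hstt, hjt⟩

lemma lamClan_cpair {i j : ℕ} (hi : 1 ≤ i) (hij : i < j) (hj : j ≤ p + q) :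
    (((lamClan Fl γ H).cpair i j : ℕ) : ℤ) = (Rk p q Fl i j : ℤ) - j := by
  rw [← mZ_regionsum Fl hi hij hj]
  have hsymb : (lamClan Fl γ H).symbol = lamSymbol p q Fl γ := rfl
  unfold Clan.cpair
  rw [hsymb]
  have hfin := sum_fin_shift (n := p + q) 0 i (by omega : i ≤ p + q)
    (fun s' => ∑ t ∈ Ico (j + 1) (p + q + 1), mZ p q Fl s' t)
  rw [show (0 : ℕ) + 1 = 1 from rfl] at hfin
  rw [← hfin, ← Finset.sum_boole, Finset.sum_filter]
  apply Finset.sum_congr rfl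
  intro s _
  by_cases hsi : s.val < i
  · have hic := inner_card Fl γ H hij s hsi
    have h01 : ∀ t, j < t → t ≤ p + q →
        mZ p q Fl (s.val + 1) t = 0 ∨ mZ p q Fl (s.val + 1) t = 1 := by
      intro t h1 h2
      have := mZ_bounds Fl (show 1 ≤ s.val + 1 by omega) (show s.val + 1 < t by omega) h2
      omega
    have hshift := card_fin_shift (n := p + q) j (p + q) le_rfl
      (fun t => mZ p q Fl (s.val + 1) t) h01
    rw [if_pos (show 0 ≤ s.val ∧ s.val < i from ⟨Nat.zero_le _, hsi⟩)]
    rw [← hshift, hic]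
    by_cases hex : ∃ t : Fin (p + q), lamSymbol p q Fl γ s = Sum.inl t ∧ s < t ∧ j ≤ t.val
    · rw [if_pos hex, if_pos ⟨hsi, hex⟩]
      norm_num
    · rw [if_neg hex, if_neg (fun hc => hex hc.2)]
      norm_num
  · rw [if_neg (fun hc => hsi hc.1), if_neg (fun hc => hsi hc.2)]

end CpairSec
/-- A complete flag satisfies the dimension conditions
`dim(F_i ∩ E_p) = γ(i;+)`, `dim(F_i ∩ Ẽ_q) = γ(i;-)` for all `i` iff it lies
in `Q_λ` for some clan `λ` with the same FS-pattern as `γ`; i.e. `Y₀` is the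
union of the `Q_λ` over clans `λ` with `FS(λ) = FS(γ)`. -/
theorem Y0_eq_union_QFS {p q : ℕ} (hn : 1 ≤ p + q) (γ : Clan p q)
    (Fl : CompleteFlag (p + q)) :
    (∀ i : ℕ, 1 ≤ i → ∀ hi : i ≤ p + q,
        finrank ℂ ↥(Fl.F ⟨i, by omega⟩ ⊓ Efirst (p + q) p) = γ.cplus i ∧
        finrank ℂ ↥(Fl.F ⟨i, by omega⟩ ⊓ Elast (p + q) q) = γ.cminus i)
      ↔ ∃ lam : Clan p q, lam.FS = γ.FS ∧ MemQ lam Fl := by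
  constructor
  · intro H
    refine ⟨lamClan Fl γ H, lamClan_FS Fl γ H, ?_, ?_⟩
    · intro i h1 hi
      constructor
      · rw [Clan.cplus_congr γ (lamClan_FS Fl γ H)]
        exact (H i h1 hi).1
      · rw [Clan.cminus_congr γ (lamClan_FS Fl γ H)]
        exact (H i h1 hi).2
    · intro i j h1 hij hj
      have hR : (Fl.F ⟨i, by omega⟩).map (projE (p + q) p) ⊔ Fl.F ⟨j, by omega⟩
          = (FF Fl i).map (projE (p + q) p) ⊔ FF Fl j := by
        rw [FF_eq Fl (show i ≤ p + q by omega), FF_eq Fl hj]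
      rw [hR]
      show Rk p q Fl i j = j + (lamClan Fl γ H).cpair i j
      have hz := lamClan_cpair Fl γ H h1 hij hj
      omega
  · rintro ⟨lam, hFS, hQ⟩
    intro i h1 hi
    constructor
    · rw [← Clan.cplus_congr γ hFS]
      exact (hQ.1 i h1 hi).1
    · rw [← Clan.cminus_congr γ hFS]
      exact (hQ.1 i h1 hi).2
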